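/- Let 𝒳 be a 1-dimensional trajectory set on which (L)-a.e. holds, and let f : 𝒳 → ℝ be bounded with finite maturity n_f, i.e. f(X) = f(X_0,…,X_{n_f}) for every X ∈ 𝒳. Then σ̄f = inf{ V ∈ ℝ : there exists a non-anticipative family (H_k)_{0 ≤ k ≤ n_f−1} such that f(X) ≤ V + Σ_{k=0}^{n_f−1} H_k(X)(X_{k+1} − X_k) holds a.e. on 𝒳 (i.e. off a null set) }. -/

import Mathlib

open scoped InnerProductSpace ENNReal
open Finset

namespace Traj

variable {E : Type*} [NormedAddCommGroup E] [InnerProductSpace ℝ E]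

/-- A trajectory set: a nonempty set of sequences sharing a common initial value. -/
def IsTrajectorySet (T : Set (ℕ → E)) (x0 : E) : Prop :=
  T.Nonempty ∧ ∀ X ∈ T, X 0 = x0

/-- The conditional trajectory set at the node `(X, k)`. -/
def condSet (T : Set (ℕ → E)) (X : ℕ → E) (k : ℕ) : Set (ℕ → E) :=
  {Y | Y ∈ T ∧ ∀ i ≤ k, Y i = X i}

/-- Non-anticipativity of a family `(G i)_{i ≥ j}` of functions on the conditional set. -/
def NonAnticipative (T : Set (ℕ → E)) (X : ℕ → E) (j : ℕ)
    {F : Type*} (G : ℕ → (ℕ → E) → F) : Prop :=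
  ∀ i, j ≤ i → ∀ Y ∈ condSet T X j, ∀ Z ∈ condSet T X j,
    (∀ k, j ≤ k → k ≤ i → Y k = Z k) → G i Y = G i Z

/-- The simple portfolio payoff `Π^{V,H}_{j,n}`. -/
noncomputable def piPort (H : ℕ → (ℕ → E) → E) (j n : ℕ) (V : ℝ) (Y : ℕ → E) : ℝ :=
  V + ∑ i ∈ Finset.Ico j n, ⟪H i Y, Y (i + 1) - Y i⟫_ℝ

/-- The total initial cost `Σ_{m ≥ 0} V^m` of a generalized portfolio (`V^m ≥ 0` for `m ≥ 1`). -/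
noncomputable def SuperhedgeCost (V : ℕ → ℝ) : EReal :=
  (V 0 : EReal) + ((∑' m : ℕ, ENNReal.ofReal (V (m + 1)) : ℝ≥0∞) : EReal)

/-- `(V, H, n)` is a generalized superhedge of `f` at node `(X, j)`: `f_0 = Π^{V⁰,H⁰}_{j,n₀}`
and, for `m ≥ 1`, `f_m = Π^{Vᵐ,Hᵐ}_{j,n_m}` with `Π^{Vᵐ,Hᵐ}_{j,n} ≥ 0` for all `n ≥ j`,
and `f ≤ Σ_{m ≥ 0} f_m` on the conditional set. -/
def IsSuperhedge (T : Set (ℕ → E)) (X : ℕ → E) (j : ℕ) (f : (ℕ → E) → EReal)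
    (V : ℕ → ℝ) (H : ℕ → ℕ → (ℕ → E) → E) (n : ℕ → ℕ) : Prop :=
  (∀ m, NonAnticipative T X j (H m)) ∧ (∀ m, j ≤ n m) ∧
  (∀ m, 1 ≤ m → ∀ k, j ≤ k → ∀ Y ∈ condSet T X j, 0 ≤ piPort (H m) j k (V m) Y) ∧
  (∀ Y ∈ condSet T X j,
    f Y ≤ (piPort (H 0) j (n 0) (V 0) Y : EReal)
      + ((∑' m : ℕ, ENNReal.ofReal (piPort (H (m + 1)) j (n (m + 1)) (V (m + 1)) Y) :
          ℝ≥0∞) : EReal))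

/-- The conditional superhedging operator `σ̄_j f (X)`. -/
noncomputable def sigmaUp (T : Set (ℕ → E)) (X : ℕ → E) (j : ℕ)
    (f : (ℕ → E) → EReal) : EReal :=
  sInf {c : EReal | ∃ V H n, IsSuperhedge T X j f V H n ∧ c = SuperhedgeCost V}

/-- The conditional underhedging operator `σ̲_j f = -σ̄_j (-f)`. -/
noncomputable def sigmaDown (T : Set (ℕ → E)) (X : ℕ → E) (j : ℕ)
    (f : (ℕ → E) → EReal) : EReal :=
  - sigmaUp T X j (fun Y => - f Y)

/-- Hedge data for the conditional norm operator: all portfolios are nonnegative. -/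
def IsNormHedge (T : Set (ℕ → E)) (X : ℕ → E) (j : ℕ) (f : (ℕ → E) → ℝ≥0∞)
    (V : ℕ → ℝ) (H : ℕ → ℕ → (ℕ → E) → E) (n : ℕ → ℕ) : Prop :=
  (∀ m, NonAnticipative T X j (H m)) ∧ (∀ m, j ≤ n m) ∧
  (∀ m, ∀ k, j ≤ k → ∀ Y ∈ condSet T X j, 0 ≤ piPort (H m) j k (V m) Y) ∧
  (∀ Y ∈ condSet T X j,
    f Y ≤ ∑' m : ℕ, ENNReal.ofReal (piPort (H m) j (n m) (V m) Y))

/-- The conditional norm operator `Ī_j f (X)` (for nonnegative extended-real `f`). -/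
noncomputable def Ibar (T : Set (ℕ → E)) (X : ℕ → E) (j : ℕ)
    (f : (ℕ → E) → ℝ≥0∞) : ℝ≥0∞ :=
  sInf {c : ℝ≥0∞ | ∃ V H n, IsNormHedge T X j f V H n ∧
    c = ∑' m : ℕ, ENNReal.ofReal (V m)}

/-- `A` is conditionally null at the node `(X, j)`. -/
def NullAt (T : Set (ℕ → E)) (X : ℕ → E) (j : ℕ) (A : Set (ℕ → E)) : Prop :=
  Ibar T X j (A.indicator fun _ => (1 : ℝ≥0∞)) = 0

/-- `A` is a (global) null set. -/
def IsNull (T : Set (ℕ → E)) (A : Set (ℕ → E)) : Prop :=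
  ∀ X ∈ T, NullAt T X 0 A

/-- Property `(L_{(X,j)})`. -/
def PropertyL (T : Set (ℕ → E)) (X : ℕ → E) (j : ℕ) : Prop :=
  ∀ V H n, IsSuperhedge T X j (fun _ => (0 : EReal)) V H n →
    (0 : EReal) ≤ SuperhedgeCost V

/-- `(X, k)` is an arbitrage-free node. -/
def ArbitrageFreeNode (T : Set (ℕ → E)) (X : ℕ → E) (k : ℕ) : Prop :=
  ∀ h : E, (∀ Y ∈ condSet T X k, ⟪h, Y (k + 1) - Y k⟫_ℝ = 0) ∨
    (⨅ Y ∈ condSet T X k, ((⟪h, Y (k + 1) - Y k⟫_ℝ : ℝ) : EReal)) < 0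

/-- The set `𝒩` of trajectories passing (non-constantly) through an arbitrage node. -/
def arbNull (T : Set (ℕ → E)) : Set (ℕ → E) :=
  {X | X ∈ T ∧ ∃ j : ℕ, ¬ ArbitrageFreeNode T X j ∧ X (j + 1) ≠ X j}

/-- Property `(L)`-a.e. -/
def LaeHolds (T : Set (ℕ → E)) : Prop :=
  (∀ X ∈ T \ arbNull T, ∀ k, 1 ≤ k → PropertyL T X k) ∧
  (∀ X ∈ T, PropertyL T X 0)

/-- A bounded non-anticipative stopping rule. -/
def BoundedStoppingRule (T : Set (ℕ → E)) (N : (ℕ → E) → ℕ) : Prop :=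
  (∃ nstar, ∀ X ∈ T, N X ≤ nstar) ∧
  (∀ k : ℕ, ∀ X ∈ T, ∀ Y ∈ T, (∀ i ≤ k, X i = Y i) → (N X ≤ k ↔ N Y ≤ k))

end Traj

namespace Traj


section AuxLemmas

lemma piPortR (H : ℕ → (ℕ → ℝ) → ℝ) (j n : ℕ) (V : ℝ) (Y : ℕ → ℝ) :
    piPort H j n V Y = V + ∑ i ∈ Finset.Ico j n, H i Y * (Y (i + 1) - Y i) := by
  unfold piPort; simp only [Real.inner_apply]

lemma condSet_zero {T : Set (ℕ → ℝ)} {x0 : ℝ} (hT : IsTrajectorySet T x0)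
    {X : ℕ → ℝ} (hX : X ∈ T) : condSet T X 0 = T := by
  ext Y
  constructor
  · exact fun h => h.1
  · intro h
    refine ⟨h, fun i hi => ?_⟩
    have hi0 : i = 0 := Nat.le_zero.mp hi
    subst hi0
    rw [hT.2 Y h, hT.2 X hX]

lemma ereal_le_of_forall_eps {x : EReal} {y : ℝ}
    (h : ∀ ε : ℝ, 0 < ε → x ≤ ((y + ε : ℝ) : EReal)) : x ≤ (y : EReal) := by
  by_contra hc
  push_neg at hc
  obtain ⟨z, hz1, hz2⟩ := EReal.exists_between_coe_real hc
  have hyz : y < z := by exact_mod_cast hz1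
  have h1 := h ((z - y) / 2) (by linarith)
  have h2 : ((y + (z - y) / 2 : ℝ) : EReal) < (z : EReal) := by
    exact_mod_cast (by linarith : y + (z - y) / 2 < z)
  exact absurd ((h1.trans h2.le).trans_lt hz2) (lt_irrefl x)

lemma ennreal_coe_toReal {S : ℝ≥0∞} (h : S ≠ ⊤) :
    ((S : EReal)) = ((S.toReal : ℝ) : EReal) := by
  rw [← EReal.toReal_coe_ennreal (x := S)]
  exact (EReal.coe_toReal (by simpa [EReal.coe_ennreal_eq_top_iff] using h)
    (EReal.coe_ennreal_ne_bot S)).symm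

lemma ereal_shift {x a : ℝ} {S : ℝ≥0∞} :
    (x : EReal) ≤ (a : EReal) + (S : EReal) ↔
      (0 : EReal) ≤ ((a - x : ℝ) : EReal) + (S : EReal) := by
  rcases eq_or_ne S ⊤ with h | h
  · subst h
    simp only [EReal.coe_ennreal_top, EReal.coe_add_top]
    exact ⟨fun _ => le_top, fun _ => le_top⟩
  · rw [ennreal_coe_toReal h, ← EReal.coe_add, ← EReal.coe_add,
      show (0 : EReal) = ((0 : ℝ) : EReal) by norm_cast, EReal.coe_le_coe_iff,
      EReal.coe_le_coe_iff]
    constructor <;> intro <;> linarith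

lemma ennreal_halfpow_sum : (∑' m : ℕ, ((2 : ℝ≥0∞)⁻¹) ^ (m + 1)) = 1 := by
  have h : ∀ m : ℕ, ((2 : ℝ≥0∞)⁻¹) ^ (m + 1) = 2⁻¹ * (2⁻¹) ^ m := fun m => by
    rw [pow_succ, mul_comm]
  calc (∑' m : ℕ, ((2 : ℝ≥0∞)⁻¹) ^ (m + 1)) = ∑' m : ℕ, 2⁻¹ * (2⁻¹) ^ m := tsum_congr h
    _ = 2⁻¹ * ∑' m : ℕ, ((2 : ℝ≥0∞)⁻¹) ^ m := ENNReal.tsum_mul_left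
    _ = 2⁻¹ * (1 - 2⁻¹)⁻¹ := by rw [ENNReal.tsum_geometric]
    _ = 1 := by
        rw [ENNReal.one_sub_inv_two]
        exact ENNReal.mul_inv_cancel (ENNReal.inv_ne_zero.mpr (by norm_num))
          (ENNReal.inv_ne_top.mpr (by norm_num))

lemma ofReal_halfpow_sum : (∑' m : ℕ, ENNReal.ofReal ((2⁻¹ : ℝ) ^ (m + 1))) = 1 := by
  have h : ∀ m : ℕ, ENNReal.ofReal ((2⁻¹ : ℝ) ^ (m + 1)) = ((2 : ℝ≥0∞)⁻¹) ^ (m + 1) := by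
    intro m
    rw [ENNReal.ofReal_pow (by norm_num)]
    congr 1
    rw [ENNReal.ofReal_inv_of_pos (by norm_num)]
    norm_num
  rw [tsum_congr h, ennreal_halfpow_sum]

lemma nullAt_iff {T : Set (ℕ → ℝ)} {X : ℕ → ℝ} {A : Set (ℕ → ℝ)} :
    NullAt T X 0 A ↔ ∀ ε : ℝ≥0∞, 0 < ε → ∃ V H n,
      IsNormHedge T X 0 (A.indicator fun _ => (1 : ℝ≥0∞)) V H n ∧
      (∑' m : ℕ, ENNReal.ofReal (V m)) ≤ ε := by
  unfold NullAt Ibar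
  constructor
  · intro h ε hε
    have hlt : sInf {c : ℝ≥0∞ | ∃ V H n, IsNormHedge T X 0
        (A.indicator fun _ => (1 : ℝ≥0∞)) V H n ∧
        c = ∑' m : ℕ, ENNReal.ofReal (V m)} < ε := by rw [h]; exact hε
    obtain ⟨c, hc, hcε⟩ := sInf_lt_iff.mp hlt
    obtain ⟨V, H, n, hh, rfl⟩ := hc
    exact ⟨V, H, n, hh, hcε.le⟩
  · intro h
    refine le_antisymm ?_ zero_le
    refine ENNReal.le_of_forall_pos_le_add fun ε hε _ => ?_
    obtain ⟨V, H, n, hh, hc⟩ := h ε (by exact_mod_cast hε)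
    refine le_trans (sInf_le ⟨V, H, n, hh, rfl⟩) ?_
    simpa using hc

lemma isNull_iUnion {T : Set (ℕ → ℝ)} {A : ℕ → Set (ℕ → ℝ)}
    (h : ∀ i, IsNull T (A i)) : IsNull T (⋃ i, A i) := by
  intro X hX
  rw [nullAt_iff]
  intro ε hε
  have hchoice : ∀ i : ℕ, ∃ V H n,
      IsNormHedge T X 0 ((A i).indicator fun _ => (1 : ℝ≥0∞)) V H n ∧
      (∑' m : ℕ, ENNReal.ofReal (V m)) ≤ ε * 2⁻¹ ^ (i + 1) := fun i =>
    (nullAt_iff.mp (h i X hX)) _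
      (ENNReal.mul_pos hε.ne' (pow_ne_zero _ (ENNReal.inv_ne_zero.mpr (by norm_num))))
  choose Vc Hc nc hhedge hcost using hchoice
  classical
  set e : ℕ ≃ ℕ × ℕ := Nat.pairEquiv.symm with he
  refine ⟨fun m => Vc (e m).1 (e m).2, fun m => Hc (e m).1 (e m).2,
    fun m => nc (e m).1 (e m).2, ⟨?_, ?_, ?_, ?_⟩, ?_⟩
  · exact fun m => (hhedge (e m).1).1 (e m).2
  · exact fun m => Nat.zero_le _
  · exact fun m => (hhedge (e m).1).2.2.1 (e m).2
  · intro Y hY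
    by_cases hmem : Y ∈ ⋃ i, A i
    · obtain ⟨i, hi⟩ := Set.mem_iUnion.mp hmem
      have h1 : ((A i).indicator (fun _ => (1 : ℝ≥0∞))) Y ≤
          ∑' m : ℕ, ENNReal.ofReal (piPort (Hc i m) 0 (nc i m) (Vc i m) Y) :=
        (hhedge i).2.2.2 Y hY
      have h2 : (∑' m : ℕ, ENNReal.ofReal
            (piPort (Hc (e m).1 (e m).2) 0 (nc (e m).1 (e m).2) (Vc (e m).1 (e m).2) Y))
          = ∑' (a : ℕ) (b : ℕ), ENNReal.ofReal (piPort (Hc a b) 0 (nc a b) (Vc a b) Y) := by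
        rw [e.tsum_eq (fun p : ℕ × ℕ =>
          ENNReal.ofReal (piPort (Hc p.1 p.2) 0 (nc p.1 p.2) (Vc p.1 p.2) Y))]
        exact ENNReal.tsum_prod'
      rw [Set.indicator_of_mem hmem, h2]
      calc (1 : ℝ≥0∞) = ((A i).indicator (fun _ => (1 : ℝ≥0∞))) Y :=
            (Set.indicator_of_mem hi (fun _ => (1 : ℝ≥0∞))).symm
        _ ≤ ∑' b : ℕ, ENNReal.ofReal (piPort (Hc i b) 0 (nc i b) (Vc i b) Y) := h1
        _ ≤ ∑' (a : ℕ) (b : ℕ), ENNReal.ofReal (piPort (Hc a b) 0 (nc a b) (Vc a b) Y) :=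
            ENNReal.le_tsum i
    · rw [Set.indicator_of_notMem hmem]
      exact zero_le
  · calc (∑' m : ℕ, ENNReal.ofReal (Vc (e m).1 (e m).2))
        = ∑' (a : ℕ) (b : ℕ), ENNReal.ofReal (Vc a b) := by
          rw [e.tsum_eq (fun p : ℕ × ℕ => ENNReal.ofReal (Vc p.1 p.2))]
          exact ENNReal.tsum_prod'
      _ ≤ ∑' a : ℕ, ε * 2⁻¹ ^ (a + 1) := ENNReal.tsum_le_tsum fun a => hcost a
      _ = ε * ∑' a : ℕ, ((2 : ℝ≥0∞)⁻¹) ^ (a + 1) := ENNReal.tsum_mul_left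
      _ = ε := by rw [ennreal_halfpow_sum, mul_one]

lemma scaled_null {T : Set (ℕ → ℝ)} {x0 : ℝ} (hT : IsTrajectorySet T x0)
    (W : ℕ → ℝ) (G : ℕ → ℕ → (ℕ → ℝ) → ℝ)
    (hna : ∀ m, ∀ i : ℕ, ∀ Y ∈ T, ∀ Z ∈ T, (∀ k ≤ i, Y k = Z k) → G m i Y = G m i Z)
    (hpos : ∀ m k, ∀ Y ∈ T, 0 ≤ piPort (G m) 0 k (W m) Y)
    (hτ : (∑' m : ℕ, ENNReal.ofReal (W m)) ≠ ⊤) (k : ℕ) :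
    IsNull T {Z | ∑' m : ℕ, ENNReal.ofReal (piPort (G m) 0 k (W m) Z) = ⊤} := by
  intro X hX
  have hcond := condSet_zero hT hX
  have hmemT : ∀ {Y : ℕ → ℝ}, Y ∈ condSet T X 0 → Y ∈ T := fun hY => hY.1
  rw [nullAt_iff]
  intro ε hε
  set τ := ∑' m : ℕ, ENNReal.ofReal (W m) with hτd
  set δ := min ε 1 with hδd
  have hδ0 : δ ≠ 0 := (lt_min hε zero_lt_one).ne'
  have hδt : δ ≠ ⊤ := ne_top_of_le_ne_top (by norm_num) (min_le_right _ _)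
  set r := δ.toReal / (τ.toReal + 1) with hrd
  have hτR : (0 : ℝ) ≤ τ.toReal := ENNReal.toReal_nonneg
  have hr0 : 0 < r := div_pos (ENNReal.toReal_pos hδ0 hδt) (by linarith)
  have hofr : ENNReal.ofReal r * τ ≤ δ := by
    have h1 : ENNReal.ofReal r = δ / (τ + 1) := by
      rw [hrd, ENNReal.ofReal_div_of_pos (by linarith), ENNReal.ofReal_toReal hδt,
        ENNReal.ofReal_add hτR zero_le_one, ENNReal.ofReal_toReal hτ, ENNReal.ofReal_one]
    rw [h1]
    calc δ / (τ + 1) * τ ≤ δ / (τ + 1) * (τ + 1) :=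
          mul_le_mul_right (self_le_add_right τ 1) _
      _ = δ := ENNReal.div_mul_cancel (by simp) (by simp [hτ])
  -- the scaled hedge
  have hW : ∀ m, 0 ≤ W m := by
    intro m
    obtain ⟨Y0, hY0⟩ := hT.1
    have := hpos m 0 Y0 hY0
    simpa [piPortR] using this
  have hpp : ∀ m k' Z, piPort (fun i Z => if i < k then r * G m i Z else 0) 0 k' (r * W m) Z
      = r * piPort (G m) 0 (min k' k) (W m) Z := by
    intro m k' Z
    rw [piPortR, piPortR, mul_add, Finset.mul_sum]
    congr 1
    have hsub : Finset.Ico 0 (min k' k) ⊆ Finset.Ico 0 k' :=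
      Finset.Ico_subset_Ico le_rfl (min_le_left _ _)
    have hzero : ∀ i ∈ Finset.Ico 0 k', i ∉ Finset.Ico 0 (min k' k) →
        (if i < k then r * G m i Z else 0) * (Z (i + 1) - Z i) = 0 := by
      intro i hi hni
      have h1 : ¬ i < min k' k := fun hlt => hni (Finset.mem_Ico.mpr ⟨Nat.zero_le i, hlt⟩)
      have h2 : ¬ i < k := fun h3 => h1 (lt_min (Finset.mem_Ico.mp hi).2 h3)
      rw [if_neg h2, zero_mul]
    rw [← Finset.sum_subset hsub hzero]
    refine Finset.sum_congr rfl fun i hi => ?_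
    have h1 : i < k := lt_of_lt_of_le (Finset.mem_Ico.mp hi).2 (min_le_right _ _)
    rw [if_pos h1]
    ring
  refine ⟨fun m => r * W m, fun m i Z => if i < k then r * G m i Z else 0, fun _ => k,
    ⟨?_, ?_, ?_, ?_⟩, ?_⟩
  · intro m i _ Y hY Z hZ hag
    dsimp only
    split_ifs with h
    · rw [hna m i Y (hmemT hY) Z (hmemT hZ) (fun l hl => hag l (Nat.zero_le l) hl)]
    · rfl
  · exact fun m => Nat.zero_le _
  · intro m k' _ Y hY
    dsimp only
    rw [hpp]
    exact mul_nonneg hr0.le (hpos m _ Y (hmemT hY))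
  · intro Z hZ
    by_cases hZB : Z ∈ {Z | ∑' m : ℕ, ENNReal.ofReal (piPort (G m) 0 k (W m) Z) = ⊤}
    · rw [Set.indicator_of_mem hZB]
      have htop : (∑' m : ℕ, ENNReal.ofReal
          (piPort (fun i Z => if i < k then r * G m i Z else 0) 0 k (r * W m) Z)) = ⊤ := by
        have h1 : ∀ m : ℕ, ENNReal.ofReal
            (piPort (fun i Z => if i < k then r * G m i Z else 0) 0 k (r * W m) Z)
            = ENNReal.ofReal r * ENNReal.ofReal (piPort (G m) 0 k (W m) Z) := by
          intro m
          rw [hpp, min_self, ENNReal.ofReal_mul hr0.le]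
        rw [tsum_congr h1, ENNReal.tsum_mul_left, hZB]
        rw [ENNReal.mul_top (by simpa [ENNReal.ofReal_eq_zero] using hr0.not_ge)]
      rw [htop]
      exact le_top
    · rw [Set.indicator_of_notMem hZB]
      exact zero_le
  · have h1 : ∀ m : ℕ, ENNReal.ofReal (r * W m)
        = ENNReal.ofReal r * ENNReal.ofReal (W m) := fun m => ENNReal.ofReal_mul hr0.le
    rw [tsum_congr h1, ENNReal.tsum_mul_left, ← hτd]
    exact le_trans hofr (min_le_left _ _)

open Classical in
noncomputable def hsel (S : Set (ℕ → ℝ)) (j : ℕ) : ℝ :=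
  if h : ∃ hh : ℝ, (∀ Y ∈ S, 0 ≤ hh * (Y (j + 1) - Y j)) ∧
      (∃ Y ∈ S, hh * (Y (j + 1) - Y j) ≠ 0) then h.choose else 0

lemma hsel_nonneg {S : Set (ℕ → ℝ)} {j : ℕ} {Y : ℕ → ℝ} (hY : Y ∈ S) :
    0 ≤ hsel S j * (Y (j + 1) - Y j) := by
  unfold hsel
  split_ifs with h
  · exact h.choose_spec.1 Y hY
  · simp

lemma hsel_pos {T : Set (ℕ → ℝ)} {Z : ℕ → ℝ} {j : ℕ} (hZT : Z ∈ T)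
    (harb : ¬ ArbitrageFreeNode T Z j) (hmove : Z (j + 1) ≠ Z j) :
    0 < hsel (condSet T Z j) j * (Z (j + 1) - Z j) := by
  unfold ArbitrageFreeNode at harb
  push_neg at harb
  obtain ⟨h, hne, hinf⟩ := harb
  simp only [Real.inner_apply] at hne hinf
  have hall : ∀ Y ∈ condSet T Z j, 0 ≤ h * (Y (j + 1) - Y j) := by
    intro Y hY
    have h1 : (0 : EReal) ≤ ((h * (Y (j + 1) - Y j) : ℝ) : EReal) := by
      refine le_trans hinf ?_
      refine iInf_le_of_le Y ?_
      exact iInf_le_of_le hY (le_refl _)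
    have h2 : (0 : ℝ) ≤ h * (Y (j + 1) - Y j) := by exact_mod_cast h1
    exact h2
  obtain ⟨Y0, hY0, hY0ne⟩ := hne
  have hcondex : ∃ hh : ℝ, (∀ Y ∈ condSet T Z j, 0 ≤ hh * (Y (j + 1) - Y j)) ∧
      (∃ Y ∈ condSet T Z j, hh * (Y (j + 1) - Y j) ≠ 0) :=
    ⟨h, hall, ⟨Y0, hY0, hY0ne⟩⟩
  unfold hsel
  rw [dif_pos hcondex]
  set g := hcondex.choose with hg
  obtain ⟨hgall, Y1, hY1, hY1ne⟩ := hcondex.choose_spec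
  have hg0 : g ≠ 0 := by
    intro h0
    rw [← hg, h0, zero_mul] at hY1ne
    exact hY1ne rfl
  have hself : Z ∈ condSet T Z j := ⟨hZT, fun i _ => rfl⟩
  have h1 : 0 ≤ g * (Z (j + 1) - Z j) := hgall Z hself
  have h2 : g * (Z (j + 1) - Z j) ≠ 0 := mul_ne_zero hg0 (sub_ne_zero.mpr hmove)
  exact h1.lt_of_ne (Ne.symm h2)

lemma condSet_congr {T : Set (ℕ → ℝ)} {Y Z : ℕ → ℝ} {i : ℕ}
    (hag : ∀ k ≤ i, Y k = Z k) : condSet T Y i = condSet T Z i := by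
  ext W
  unfold condSet
  simp only [Set.mem_setOf_eq]
  constructor <;> rintro ⟨hW, hWa⟩ <;> refine ⟨hW, fun l hl => ?_⟩
  · rw [hWa l hl, hag l hl]
  · rw [hWa l hl, hag l hl]

lemma arbNull_isNull {T : Set (ℕ → ℝ)} {x0 : ℝ} (hT : IsTrajectorySet T x0) :
    IsNull T (arbNull T) := by
  intro X hX
  have hcond := condSet_zero hT hX
  have hmemT : ∀ {Y : ℕ → ℝ}, Y ∈ condSet T X 0 → Y ∈ T := fun hY => hY.1
  rw [nullAt_iff]
  intro ε hε
  set δ := min ε 1 with hδd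
  have hδ0 : δ ≠ 0 := (lt_min hε zero_lt_one).ne'
  have hδt : δ ≠ ⊤ := ne_top_of_le_ne_top (by norm_num) (min_le_right _ _)
  set e0 := δ.toReal with he0
  have he0pos : 0 < e0 := ENNReal.toReal_pos hδ0 hδt
  refine ⟨fun m => e0 * (2⁻¹ : ℝ) ^ (m + 1),
    fun m i Z => if i < m then hsel (condSet T Z i) i else 0, fun m => m,
    ⟨?_, ?_, ?_, ?_⟩, ?_⟩
  · intro m i _ Y hY Z hZ hag
    dsimp only
    split_ifs with h
    · rw [condSet_congr (fun l hl => hag l (Nat.zero_le l) hl)]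
    · rfl
  · exact fun m => Nat.zero_le _
  · intro m k _ Y hY
    rw [piPortR]
    dsimp only
    refine add_nonneg (mul_nonneg he0pos.le (by positivity)) ?_
    refine Finset.sum_nonneg fun i _ => ?_
    split_ifs with h
    · exact hsel_nonneg ⟨hmemT hY, fun l _ => rfl⟩
    · simp
  · intro Z hZ
    by_cases hZA : Z ∈ arbNull T
    · rw [Set.indicator_of_mem hZA]
      obtain ⟨hZT', j0, harb, hmove⟩ := hZA
      set d0 := hsel (condSet T Z j0) j0 * (Z (j0 + 1) - Z j0) with hd0
      have hd0pos : 0 < d0 := hsel_pos hZT' harb hmove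
      have hterm : ∀ m, j0 < m → ENNReal.ofReal d0 ≤ ENNReal.ofReal
          (piPort (fun i Z => if i < m then hsel (condSet T Z i) i else 0) 0 m
            (e0 * (2⁻¹ : ℝ) ^ (m + 1)) Z) := by
        intro m hm
        refine ENNReal.ofReal_le_ofReal ?_
        rw [piPortR]
        have hj0 : j0 ∈ Finset.Ico 0 m := Finset.mem_Ico.mpr ⟨Nat.zero_le j0, hm⟩
        have hsum : d0 ≤ ∑ i ∈ Finset.Ico 0 m,
            (if i < m then hsel (condSet T Z i) i else 0) * (Z (i + 1) - Z i) := by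
          have hle : d0 = (if j0 < m then hsel (condSet T Z j0) j0 else 0) * (Z (j0 + 1) - Z j0) := by
            rw [if_pos hm]
          rw [hle]
          refine Finset.single_le_sum (f := fun i =>
            (if i < m then hsel (condSet T Z i) i else 0) * (Z (i + 1) - Z i)) ?_ hj0
          intro i _
          split_ifs with h
          · exact hsel_nonneg ⟨hZT', fun l _ => rfl⟩
          · simp
        have h2 : 0 ≤ e0 * (2⁻¹ : ℝ) ^ (m + 1) := by positivity
        linarith
      have htop : (∑' m : ℕ, ENNReal.ofReal
          (piPort (fun i Z => if i < m then hsel (condSet T Z i) i else 0) 0 m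
            (e0 * (2⁻¹ : ℝ) ^ (m + 1)) Z)) = ⊤ := by
        refine top_le_iff.mp ?_
        have hinj : Function.Injective (fun l : ℕ => l + (j0 + 1)) :=
          fun a b hab => by simpa using hab
        calc (⊤ : ℝ≥0∞) = ∑' _ : ℕ, ENNReal.ofReal d0 :=
              (ENNReal.tsum_const_eq_top_of_ne_zero (by simpa [ENNReal.ofReal_eq_zero] using hd0pos.not_ge)).symm
          _ ≤ ∑' l : ℕ, ENNReal.ofReal
              (piPort (fun i Z => if i < l + (j0 + 1) then hsel (condSet T Z i) i else 0) 0
                (l + (j0 + 1)) (e0 * (2⁻¹ : ℝ) ^ (l + (j0 + 1) + 1)) Z) :=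
              ENNReal.tsum_le_tsum fun l => hterm (l + (j0 + 1)) (by omega)
          _ ≤ _ := ENNReal.tsum_comp_le_tsum_of_injective hinj _
      rw [htop]
      exact le_top
    · rw [Set.indicator_of_notMem hZA]
      exact zero_le
  · have h1 : ∀ m : ℕ, ENNReal.ofReal (e0 * (2⁻¹ : ℝ) ^ (m + 1))
        = ENNReal.ofReal e0 * ENNReal.ofReal ((2⁻¹ : ℝ) ^ (m + 1)) := fun m =>
      ENNReal.ofReal_mul he0pos.le
    rw [tsum_congr h1, ENNReal.tsum_mul_left, ofReal_halfpow_sum, mul_one, he0,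
      ENNReal.ofReal_toReal hδt]
    exact min_le_left _ _

end AuxLemmas

lemma sigmaUp_le_single {T : Set (ℕ → ℝ)} {x0 : ℝ} (hT : IsTrajectorySet T x0)
    {X : ℕ → ℝ} (hX : X ∈ T) (f : (ℕ → ℝ) → ℝ) (nf : ℕ)
    (V : ℝ) (H : ℕ → (ℕ → ℝ) → ℝ) (A : Set (ℕ → ℝ))
    (hna : ∀ i, i < nf → ∀ Y ∈ T, ∀ Z ∈ T, (∀ k ≤ i, Y k = Z k) → H i Y = H i Z)
    (hAnull : IsNull T A)
    (hsup : ∀ Y ∈ T \ A, f Y ≤ V + ∑ i ∈ Finset.range nf, H i Y * (Y (i + 1) - Y i)) :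
    sigmaUp T X 0 (fun Y => (f Y : EReal)) ≤ (V : EReal) := by
  classical
  have hcond := condSet_zero hT hX
  have hmemT : ∀ {Y : ℕ → ℝ}, Y ∈ condSet T X 0 → Y ∈ T := fun hY => hY.1
  refine ereal_le_of_forall_eps fun ε hε => ?_
  have hchoice : ∀ ℓ : ℕ, ∃ W G nn,
      IsNormHedge T X 0 (A.indicator fun _ => (1 : ℝ≥0∞)) W G nn ∧
      (∑' m : ℕ, ENNReal.ofReal (W m)) ≤ ENNReal.ofReal ε * 2⁻¹ ^ (ℓ + 1) := fun ℓ =>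
    (nullAt_iff.mp (hAnull X hX)) _
      (ENNReal.mul_pos (ENNReal.ofReal_pos.mpr hε).ne'
        (pow_ne_zero _ (ENNReal.inv_ne_zero.mpr (by norm_num))))
  choose W G nn hhedge hcost using hchoice
  set e : ℕ ≃ ℕ × ℕ := Nat.pairEquiv.symm with he
  set V' : ℕ → ℝ := fun m => Nat.casesOn m V (fun m' => W (e m').1 (e m').2) with hV'
  set H' : ℕ → ℕ → (ℕ → ℝ) → ℝ := fun m => Nat.casesOn m
    (fun i Y => if i < nf then H i Y else 0) (fun m' => G (e m').1 (e m').2) with hH'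
  set n' : ℕ → ℕ := fun m => Nat.casesOn m nf (fun m' => nn (e m').1 (e m').2) with hn'
  have hsh : IsSuperhedge T X 0 (fun Y => (f Y : EReal)) V' H' n' := by
    refine ⟨?_, fun m => Nat.zero_le _, ?_, ?_⟩
    · intro m
      cases m with
      | zero =>
        intro i _ Y hY Z hZ hag
        show (if i < nf then H i Y else 0) = (if i < nf then H i Z else 0)
        split_ifs with h
        · exact hna i h Y (hmemT hY) Z (hmemT hZ) (fun k hk => hag k (Nat.zero_le k) hk)
        · rfl
      | succ m' => exact (hhedge (e m').1).1 (e m').2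
    · intro m hm k hk Y hY
      obtain ⟨m', rfl⟩ : ∃ m', m = m' + 1 := ⟨m - 1, (Nat.succ_pred_eq_of_pos hm).symm⟩
      exact (hhedge (e m').1).2.2.1 (e m').2 k hk Y hY
    · intro Y hY
      have hYT : Y ∈ T := hmemT hY
      by_cases hA : Y ∈ A
      · have htop : (∑' m : ℕ, ENNReal.ofReal
            (piPort (H' (m + 1)) 0 (n' (m + 1)) (V' (m + 1)) Y)) = ⊤ := by
          refine top_le_iff.mp ?_
          calc (⊤ : ℝ≥0∞) = ∑' _ : ℕ, (1 : ℝ≥0∞) :=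
                (ENNReal.tsum_const_eq_top_of_ne_zero one_ne_zero).symm
            _ ≤ ∑' ℓ : ℕ, ∑' j : ℕ, ENNReal.ofReal (piPort (G ℓ j) 0 (nn ℓ j) (W ℓ j) Y) := by
                refine ENNReal.tsum_le_tsum fun ℓ => ?_
                have h1 := (hhedge ℓ).2.2.2 Y hY
                rwa [Set.indicator_of_mem hA] at h1
            _ = ∑' m : ℕ, ENNReal.ofReal
                (piPort (H' (m + 1)) 0 (n' (m + 1)) (V' (m + 1)) Y) := by
                rw [← ENNReal.tsum_prod (f := fun a b =>
                  ENNReal.ofReal (piPort (G a b) 0 (nn a b) (W a b) Y))]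
                exact (e.tsum_eq (fun p : ℕ × ℕ =>
                  ENNReal.ofReal (piPort (G p.1 p.2) 0 (nn p.1 p.2) (W p.1 p.2) Y))).symm
        rw [htop]
        show (f Y : EReal) ≤ _ + ((⊤ : ℝ≥0∞) : EReal)
        rw [EReal.coe_ennreal_top, EReal.coe_add_top]
        exact le_top
      · have h1 := hsup Y ⟨hYT, hA⟩
        have h2 : piPort (H' 0) 0 (n' 0) (V' 0) Y
            = V + ∑ i ∈ Finset.range nf, H i Y * (Y (i + 1) - Y i) := by
          show piPort (fun i Y => if i < nf then H i Y else 0) 0 nf V Y = _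
          rw [piPortR]
          congr 1
          rw [Finset.range_eq_Ico]
          refine Finset.sum_congr rfl fun i hi => ?_
          rw [if_pos (Finset.mem_Ico.mp hi).2]
        calc ((f Y : ℝ) : EReal) ≤ ((piPort (H' 0) 0 (n' 0) (V' 0) Y : ℝ) : EReal) := by
              rw [h2]; exact_mod_cast h1
          _ ≤ _ := le_add_of_nonneg_right (EReal.coe_ennreal_nonneg _)
  have hc1 : sigmaUp T X 0 (fun Y => (f Y : EReal)) ≤ SuperhedgeCost V' :=
    sInf_le ⟨V', H', n', hsh, rfl⟩
  refine le_trans hc1 ?_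
  unfold SuperhedgeCost
  have hV0 : V' 0 = V := rfl
  have hcost2 : (∑' m : ℕ, ENNReal.ofReal (V' (m + 1))) ≤ ENNReal.ofReal ε := by
    calc (∑' m : ℕ, ENNReal.ofReal (V' (m + 1)))
        = ∑' (a : ℕ) (b : ℕ), ENNReal.ofReal (W a b) := by
          rw [show (fun m : ℕ => ENNReal.ofReal (V' (m + 1)))
            = fun m : ℕ => (fun p : ℕ × ℕ => ENNReal.ofReal (W p.1 p.2)) (e m) from rfl]
          rw [e.tsum_eq (fun p : ℕ × ℕ => ENNReal.ofReal (W p.1 p.2))]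
          exact ENNReal.tsum_prod'
      _ ≤ ∑' a : ℕ, ENNReal.ofReal ε * 2⁻¹ ^ (a + 1) := ENNReal.tsum_le_tsum fun a => hcost a
      _ = ENNReal.ofReal ε * ∑' a : ℕ, ((2 : ℝ≥0∞)⁻¹) ^ (a + 1) := ENNReal.tsum_mul_left
      _ = ENNReal.ofReal ε := by rw [ennreal_halfpow_sum, mul_one]
  calc ((V' 0 : ℝ) : EReal) + ((∑' m : ℕ, ENNReal.ofReal (V' (m + 1)) : ℝ≥0∞) : EReal)
      ≤ ((V : ℝ) : EReal) + ((ENNReal.ofReal ε : ℝ≥0∞) : EReal) := by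
        rw [hV0]
        exact add_le_add_right (EReal.coe_ennreal_le_coe_ennreal_iff.mpr hcost2) _
    _ = ((V + ε : ℝ) : EReal) := by
        rw [EReal.coe_ennreal_ofReal, max_eq_left hε.le, ← EReal.coe_add]

lemma key_node {T : Set (ℕ → ℝ)} {x0 : ℝ} (hT : IsTrajectorySet T x0)
    (hLae : LaeHolds T) {X : ℕ → ℝ} (hX : X ∈ T)
    (f : (ℕ → ℝ) → ℝ) (nf : ℕ)
    (hmat : ∀ X ∈ T, ∀ Y ∈ T, (∀ i ≤ nf, X i = Y i) → f X = f Y)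
    (V : ℕ → ℝ) (H : ℕ → ℕ → (ℕ → ℝ) → ℝ) (n : ℕ → ℕ)
    (hsh : IsSuperhedge T X 0 (fun Y => (f Y : EReal)) V H n)
    {Z : ℕ → ℝ} (hZ : Z ∈ T) (hZn : Z ∉ arbNull T) :
    (f Z : EReal) ≤ ((piPort (H 0) 0 (min nf (n 0)) (V 0) Z : ℝ) : EReal)
      + ((∑' m : ℕ, ENNReal.ofReal
          (piPort (H (m + 1)) 0 (min nf (n (m + 1))) (V (m + 1)) Z) : ℝ≥0∞) : EReal) := by
  classical
  have hcond := condSet_zero hT hX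
  obtain ⟨hna, hjn, hpos, hmain⟩ := hsh
  have hmemX : ∀ {Y : ℕ → ℝ}, Y ∈ T → Y ∈ condSet T X 0 := fun hY => by
    rw [hcond]; exact hY
  set c : ℕ → ℝ := fun m => piPort (H m) 0 (min nf (n m)) (V m) Z with hcdef
  set H' : ℕ → ℕ → (ℕ → ℝ) → ℝ := fun m i Y => if n m ≤ nf then 0 else H m i Y with hH'def
  set n' : ℕ → ℕ := fun m => max nf (n m) with hn'def
  set V' : ℕ → ℝ := fun m => Nat.casesOn m (c 0 - f Z) (fun m' => c (m' + 1)) with hV'def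
  have hsubT : ∀ {Y : ℕ → ℝ}, Y ∈ condSet T Z nf → Y ∈ T := fun hY => hY.1
  have hagree : ∀ {Y : ℕ → ℝ}, Y ∈ condSet T Z nf → ∀ i ≤ nf, Y i = Z i := fun hY => hY.2
  have heqH : ∀ m i, i < nf → ∀ {Y : ℕ → ℝ}, Y ∈ condSet T Z nf → H m i Y = H m i Z := by
    intro m i hi Y hY
    exact hna m i (Nat.zero_le i) Y (hmemX (hsubT hY)) Z (hmemX hZ)
      (fun k _ hk => hagree hY k (hk.trans hi.le))
  have hceq : ∀ m, ∀ {Y : ℕ → ℝ}, Y ∈ condSet T Z nf →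
      piPort (H m) 0 (min nf (n m)) (V m) Y = c m := by
    intro m Y hY
    rw [hcdef]
    dsimp only
    rw [piPortR, piPortR]
    congr 1
    refine Finset.sum_congr rfl fun i hi => ?_
    have hi' : i < min nf (n m) := (Finset.mem_Ico.mp hi).2
    have hinf : i < nf := lt_of_lt_of_le hi' (min_le_left _ _)
    rw [heqH m i hinf hY, hagree hY (i + 1) (Nat.succ_le_of_lt hinf), hagree hY i hinf.le]
  have hsplit : ∀ m, ∀ {Y : ℕ → ℝ}, Y ∈ condSet T Z nf →
      piPort (H m) 0 (n m) (V m) Y = piPort (H' m) nf (n' m) (c m) Y := by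
    intro m Y hY
    by_cases hm : n m ≤ nf
    · have h1 : min nf (n m) = n m := min_eq_right hm
      have h2 : n' m = nf := max_eq_left hm
      have h3 := hceq m hY
      rw [h1] at h3
      rw [h3, piPortR, h2, Finset.Ico_self, Finset.sum_empty, add_zero]
    · have hm' : nf ≤ n m := (not_le.mp hm).le
      have h1 : min nf (n m) = nf := min_eq_left hm'
      have h2 : n' m = n m := max_eq_right hm'
      have hc3 : piPort (H m) 0 nf (V m) Y = c m := by
        have h3 := hceq m hY
        rwa [h1] at h3
      rw [piPortR] at hc3
      have hs := Finset.sum_Ico_consecutive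
        (f := fun i => H m i Y * (Y (i + 1) - Y i)) (Nat.zero_le nf) hm'
      have hH'eq : ∀ i ∈ Finset.Ico nf (n m),
          H' m i Y * (Y (i + 1) - Y i) = H m i Y * (Y (i + 1) - Y i) := by
        intro i _
        rw [hH'def]
        dsimp only
        rw [if_neg hm]
      rw [piPortR, piPortR, h2, Finset.sum_congr rfl hH'eq, ← hs]
      linarith
  have hnodepos : ∀ m k, nf ≤ k → ∀ Y ∈ condSet T Z nf,
      0 ≤ piPort (H' (m + 1)) nf k (V' (m + 1)) Y := by
    intro m k hk Y hY
    have hVm : V' (m + 1) = c (m + 1) := rfl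
    by_cases hm : n (m + 1) ≤ nf
    · have h4 : piPort (H' (m + 1)) nf k (V' (m + 1)) Y = c (m + 1) := by
        rw [piPortR, hVm]
        have hz : ∀ i ∈ Finset.Ico nf k, H' (m + 1) i Y * (Y (i + 1) - Y i) = 0 := by
          intro i _
          rw [hH'def]
          dsimp only
          rw [if_pos hm, zero_mul]
        rw [Finset.sum_eq_zero hz, add_zero]
      rw [h4, hcdef]
      exact hpos (m + 1) (Nat.le_add_left 1 m) (min nf (n (m + 1))) (Nat.zero_le _) Z (hmemX hZ)
    · have hm' : nf ≤ n (m + 1) := (not_le.mp hm).le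
      have hc3 : piPort (H (m + 1)) 0 nf (V (m + 1)) Y = c (m + 1) := by
        have h3 := hceq (m + 1) hY
        rwa [min_eq_left hm'] at h3
      rw [piPortR] at hc3
      have key : piPort (H' (m + 1)) nf k (V' (m + 1)) Y
          = piPort (H (m + 1)) 0 k (V (m + 1)) Y := by
        have hs := Finset.sum_Ico_consecutive
          (f := fun i => H (m + 1) i Y * (Y (i + 1) - Y i)) (Nat.zero_le nf) hk
        have hH'eq : ∀ i ∈ Finset.Ico nf k,
            H' (m + 1) i Y * (Y (i + 1) - Y i) = H (m + 1) i Y * (Y (i + 1) - Y i) := by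
          intro i _
          rw [hH'def]
          dsimp only
          rw [if_neg hm]
        rw [piPortR, piPortR, hVm, Finset.sum_congr rfl hH'eq, ← hs]
        linarith
      rw [key]
      exact hpos (m + 1) (Nat.le_add_left 1 m) k (Nat.zero_le _) Y (hmemX (hsubT hY))
  have hmain' : ∀ Y ∈ condSet T Z nf,
      (0 : EReal) ≤ ((piPort (H' 0) nf (n' 0) (V' 0) Y : ℝ) : EReal)
        + ((∑' m : ℕ, ENNReal.ofReal
            (piPort (H' (m + 1)) nf (n' (m + 1)) (V' (m + 1)) Y) : ℝ≥0∞) : EReal) := by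
    intro Y hY
    have h1 := hmain Y (hmemX (hsubT hY))
    dsimp only at h1
    have hfy : f Y = f Z := hmat Y (hsubT hY) Z hZ (fun i hi => hagree hY i hi)
    rw [hfy] at h1
    have h3 : piPort (H 0) 0 (n 0) (V 0) Y = piPort (H' 0) nf (n' 0) (c 0) Y := hsplit 0 hY
    rw [h3] at h1
    have h4 : (∑' m : ℕ, ENNReal.ofReal (piPort (H (m + 1)) 0 (n (m + 1)) (V (m + 1)) Y))
        = ∑' m : ℕ, ENNReal.ofReal (piPort (H' (m + 1)) nf (n' (m + 1)) (V' (m + 1)) Y) :=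
      tsum_congr fun m => by rw [hsplit (m + 1) hY]
    rw [h4] at h1
    have h5 : piPort (H' 0) nf (n' 0) (V' 0) Y = piPort (H' 0) nf (n' 0) (c 0) Y - f Z := by
      rw [piPortR, piPortR]
      show (c 0 - f Z) + _ = _
      ring
    rw [h5]
    exact ereal_shift.mp h1
  have hL : PropertyL T Z nf := by
    rcases Nat.eq_zero_or_pos nf with h0 | hpos'
    · subst h0
      exact hLae.2 Z hZ
    · exact hLae.1 Z ⟨hZ, hZn⟩ nf hpos'
  have hsh0 : IsSuperhedge T Z nf (fun _ => (0 : EReal)) V' H' n' := by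
    refine ⟨?_, fun m => le_max_left _ _, ?_, hmain'⟩
    · intro m i _ Y hY Z' hZ' hag
      rw [hH'def]
      dsimp only
      split_ifs with h
      · rfl
      · refine hna m i (Nat.zero_le i) Y (hmemX (hsubT hY)) Z' (hmemX (hsubT hZ')) ?_
        intro k _ hk
        rcases le_or_gt k nf with hkn | hkn
        · rw [hagree hY k hkn, hagree hZ' k hkn]
        · exact hag k hkn.le hk
    · intro m hm k hk Y hY
      obtain ⟨m', rfl⟩ : ∃ m', m = m' + 1 := ⟨m - 1, (Nat.succ_pred_eq_of_pos hm).symm⟩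
      exact hnodepos m' k hk Y hY
  have h0 := hL V' H' n' hsh0
  unfold SuperhedgeCost at h0
  refine ereal_shift.mpr ?_
  exact h0


/-- under `(L)`-a.e., the global superhedging price of a bounded payoff of finite
maturity equals the infimum of the initial values of single simple portfolios superhedging it
almost everywhere (i.e. off a null set). -/
theorem sigmaUp_eq_ae_singlePortfolio_inf
    (T : Set (ℕ → ℝ)) (x0 : ℝ) (hT : IsTrajectorySet T x0)
    (hLae : LaeHolds T)
    (f : (ℕ → ℝ) → ℝ) (nf : ℕ)
    (hmat : ∀ X ∈ T, ∀ Y ∈ T, (∀ i ≤ nf, X i = Y i) → f X = f Y)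
    (hbd : ∃ C : ℝ, ∀ X ∈ T, |f X| ≤ C) :
    ∀ X ∈ T,
      sigmaUp T X 0 (fun Y => (f Y : EReal)) =
        sInf {c : EReal | ∃ V : ℝ, ∃ H : ℕ → (ℕ → ℝ) → ℝ, ∃ A : Set (ℕ → ℝ),
          (∀ i, i < nf → ∀ Y ∈ T, ∀ Z ∈ T,
            (∀ k ≤ i, Y k = Z k) → H i Y = H i Z) ∧
          IsNull T A ∧
          (∀ Y ∈ T \ A,
            f Y ≤ V + ∑ i ∈ Finset.range nf, H i Y * (Y (i + 1) - Y i)) ∧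
          c = (V : EReal)} := by
  classical
  intro X hX
  have hcond := condSet_zero hT hX
  have hmemX : ∀ {Y : ℕ → ℝ}, Y ∈ T → Y ∈ condSet T X 0 := fun hY => by
    rw [hcond]; exact hY
  apply le_antisymm
  · refine le_sInf ?_
    rintro c ⟨V, H, A, hna, hAnull, hsup, rfl⟩
    exact sigmaUp_le_single hT hX f nf V H A hna hAnull hsup
  · refine le_sInf ?_
    rintro c ⟨V, H, n, hsh, rfl⟩
    by_cases hτ : (∑' m : ℕ, ENNReal.ofReal (V (m + 1))) = ⊤
    · have htop : SuperhedgeCost V = ⊤ := by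
        unfold SuperhedgeCost
        rw [hτ, EReal.coe_ennreal_top, EReal.coe_add_top]
      rw [htop]
      exact le_top
    · obtain ⟨hna, hjn, hpos, hmain⟩ := id hsh
      have hnaT : ∀ m i, ∀ Y ∈ T, ∀ Z ∈ T, (∀ k ≤ i, Y k = Z k) → H m i Y = H m i Z :=
        fun m i Y hY Z hZ hag =>
          hna m i (Nat.zero_le i) Y (hmemX hY) Z (hmemX hZ) (fun k _ hk => hag k hk)
      have hposT : ∀ m k, ∀ Y ∈ T, 0 ≤ piPort (H (m + 1)) 0 k (V (m + 1)) Y :=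
        fun m k Y hY => hpos (m + 1) (Nat.le_add_left 1 m) k (Nat.zero_le k) Y (hmemX hY)
      set Bk : ℕ → Set (ℕ → ℝ) := fun k =>
        {Z | ∑' m : ℕ, ENNReal.ofReal (piPort (H (m + 1)) 0 k (V (m + 1)) Z) = ⊤} with hBk
      have hBnull : ∀ k, IsNull T (Bk k) := fun k =>
        scaled_null hT (fun m => V (m + 1)) (fun m => H (m + 1))
          (fun m => hnaT (m + 1)) (fun m => hposT m) hτ k
      set A : Set (ℕ → ℝ) := arbNull T ∪ ⋃ k : ℕ, Bk k with hA
      have hAnull : IsNull T A := by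
        have h1 : A = ⋃ i : ℕ, (Nat.casesOn i (arbNull T) Bk : Set (ℕ → ℝ)) := by
          rw [hA]
          ext Y
          simp only [Set.mem_union, Set.mem_iUnion]
          constructor
          · rintro (h | ⟨k, h⟩)
            exacts [⟨0, h⟩, ⟨k + 1, h⟩]
          · rintro ⟨i, h⟩
            cases i with
            | zero => exact Or.inl h
            | succ k => exact Or.inr ⟨k, h⟩
        rw [h1]
        refine isNull_iUnion fun i => ?_
        cases i with
        | zero => exact arbNull_isNull hT
        | succ k => exact hBnull k
      have hcost : SuperhedgeCost V
          = ((V 0 + (∑' m : ℕ, ENNReal.ofReal (V (m + 1))).toReal : ℝ) : EReal) := by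
        unfold SuperhedgeCost
        rw [ennreal_coe_toReal hτ, ← EReal.coe_add]
      rw [hcost]
      set Hstar : ℕ → (ℕ → ℝ) → ℝ := fun i Z =>
        (if i < n 0 then H 0 i Z else 0)
          + ∑' m : ℕ, (if i < n (m + 1) then H (m + 1) i Z else 0) with hHstar
      refine sInf_le ⟨V 0 + (∑' m : ℕ, ENNReal.ofReal (V (m + 1))).toReal, Hstar, A,
        ?_, hAnull, ?_, rfl⟩
      · intro i _ Y hY Z hZ hag
        rw [hHstar]
        dsimp only
        congr 1
        · split_ifs with h
          · exact hnaT 0 i Y hY Z hZ hag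
          · rfl
        · refine tsum_congr fun m => ?_
          split_ifs with h
          · exact hnaT (m + 1) i Y hY Z hZ hag
          · rfl
      · intro Z hZmem
        obtain ⟨hZT, hZA⟩ := hZmem
        have hZarb : Z ∉ arbNull T := fun h => hZA (by rw [hA]; exact Or.inl h)
        have hZBk : ∀ k, Z ∉ Bk k := fun k h =>
          hZA (by rw [hA]; exact Or.inr (Set.mem_iUnion.mpr ⟨k, h⟩))
        have hkey := key_node hT hLae hX f nf hmat V H n hsh hZT hZarb
        -- abbreviations
        set c : ℕ → ℝ := fun m => piPort (H m) 0 (min nf (n m)) (V m) Z with hc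
        set sR : ℕ → ℕ → ℝ := fun m k => piPort (H (m + 1)) 0 k (V (m + 1)) Z with hsR
        have hsR_nonneg : ∀ m k, 0 ≤ sR m k := fun m k => hposT m k Z hZT
        have hsRnotTop : ∀ k, (∑' m : ℕ, ENNReal.ofReal (sR m k)) ≠ ⊤ := fun k => hZBk k
        have hsRsummable : ∀ k, Summable fun m => sR m k := by
          intro k
          have h2 := ENNReal.summable_toReal (hsRnotTop k)
          exact h2.congr fun m => by rw [ENNReal.toReal_ofReal (hsR_nonneg m k)]
        have hcnn : ∀ m, 0 ≤ c (m + 1) := fun m => hposT m _ Z hZT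
        have hScfin : (∑' m : ℕ, ENNReal.ofReal (c (m + 1))) ≠ ⊤ := by
          have hb : ∀ m, ENNReal.ofReal (c (m + 1))
              ≤ ∑ k ∈ Finset.range (nf + 1), ENNReal.ofReal (sR m k) := by
            intro m
            have hmem : min nf (n (m + 1)) ∈ Finset.range (nf + 1) :=
              Finset.mem_range.mpr (Nat.lt_succ_of_le (min_le_left _ _))
            exact Finset.single_le_sum (f := fun k => ENNReal.ofReal (sR m k))
              (fun k _ => zero_le) hmem
          have h3 : (∑' m : ℕ, ENNReal.ofReal (c (m + 1)))
              ≤ ∑ k ∈ Finset.range (nf + 1), ∑' m : ℕ, ENNReal.ofReal (sR m k) := by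
            refine le_trans (ENNReal.tsum_le_tsum hb) ?_
            rw [Summable.tsum_finsetSum fun k _ => ENNReal.summable]
          exact ne_top_of_le_ne_top
            (ENNReal.sum_lt_top.mpr fun k _ => lt_top_iff_ne_top.mpr (hsRnotTop k)).ne h3
        have hSummable_c : Summable fun m => c (m + 1) := by
          have h2 := ENNReal.summable_toReal hScfin
          exact h2.congr fun m => by rw [ENNReal.toReal_ofReal (hcnn m)]
        have hreal : f Z ≤ c 0 + ∑' m : ℕ, c (m + 1) := by
          have h0 : (∑' m : ℕ, ENNReal.ofReal (c (m + 1))).toReal = ∑' m : ℕ, c (m + 1) := by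
            rw [ENNReal.tsum_toReal_eq fun m => ENNReal.ofReal_ne_top]
            exact tsum_congr fun m => ENNReal.toReal_ofReal (hcnn m)
          have h1 : ((∑' m : ℕ, ENNReal.ofReal (c (m + 1)) : ℝ≥0∞) : EReal)
              = ((∑' m : ℕ, c (m + 1) : ℝ) : EReal) := by
            rw [ennreal_coe_toReal hScfin, h0]
          have h2 : (f Z : EReal) ≤ ((c 0 : ℝ) : EReal) + ((∑' m : ℕ, c (m + 1) : ℝ) : EReal) := by
            rw [← h1]
            exact hkey
          rw [← EReal.coe_add] at h2
          exact_mod_cast h2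
        have hdiff : ∀ m i, H (m + 1) i Z * (Z (i + 1) - Z i) = sR m (i + 1) - sR m i := by
          intro m i
          rw [hsR]
          dsimp only
          rw [piPortR, piPortR, Finset.sum_Ico_succ_top (Nat.zero_le i)]
          ring
        have hsummable_term : ∀ i, Summable fun m =>
            (if i < n (m + 1) then H (m + 1) i Z else 0) * (Z (i + 1) - Z i) := by
          intro i
          refine Summable.of_norm_bounded (g := fun m => sR m (i + 1) + sR m i)
            ((hsRsummable (i + 1)).add (hsRsummable i)) ?_
          intro m
          rw [Real.norm_eq_abs]
          split_ifs with h
          · rw [hdiff m i]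
            refine le_trans (abs_sub _ _) ?_
            rw [abs_of_nonneg (hsR_nonneg m (i + 1)), abs_of_nonneg (hsR_nonneg m i)]
          · rw [zero_mul, abs_zero]
            exact add_nonneg (hsR_nonneg m (i + 1)) (hsR_nonneg m i)
        have hcdecomp : ∀ m, c (m + 1) = V (m + 1)
            + ∑ i ∈ Finset.range nf, (if i < n (m + 1) then H (m + 1) i Z else 0) * (Z (i + 1) - Z i) := by
          intro m
          rw [hc]
          dsimp only
          rw [piPortR]
          congr 1
          rw [Finset.range_eq_Ico]
          have hsub : Finset.Ico 0 (min nf (n (m + 1))) ⊆ Finset.Ico 0 nf :=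
            Finset.Ico_subset_Ico le_rfl (min_le_left _ _)
          have hz : ∀ i ∈ Finset.Ico 0 nf, i ∉ Finset.Ico 0 (min nf (n (m + 1))) →
              (if i < n (m + 1) then H (m + 1) i Z else 0) * (Z (i + 1) - Z i) = 0 := by
            intro i hi hni
            have h1 : ¬ i < min nf (n (m + 1)) := fun hlt =>
              hni (Finset.mem_Ico.mpr ⟨Nat.zero_le i, hlt⟩)
            have h2 : ¬ i < n (m + 1) := fun h3 => h1 (lt_min (Finset.mem_Ico.mp hi).2 h3)
            rw [if_neg h2, zero_mul]
          rw [← Finset.sum_subset hsub hz]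
          refine Finset.sum_congr rfl fun i hi => ?_
          have h1 : i < n (m + 1) := lt_of_lt_of_le (Finset.mem_Ico.mp hi).2 (min_le_right _ _)
          rw [if_pos h1]
        have hc0decomp : c 0 = V 0
            + ∑ i ∈ Finset.range nf, (if i < n 0 then H 0 i Z else 0) * (Z (i + 1) - Z i) := by
          rw [hc]
          dsimp only
          rw [piPortR]
          congr 1
          rw [Finset.range_eq_Ico]
          have hsub : Finset.Ico 0 (min nf (n 0)) ⊆ Finset.Ico 0 nf :=
            Finset.Ico_subset_Ico le_rfl (min_le_left _ _)
          have hz : ∀ i ∈ Finset.Ico 0 nf, i ∉ Finset.Ico 0 (min nf (n 0)) →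
              (if i < n 0 then H 0 i Z else 0) * (Z (i + 1) - Z i) = 0 := by
            intro i hi hni
            have h1 : ¬ i < min nf (n 0) := fun hlt =>
              hni (Finset.mem_Ico.mpr ⟨Nat.zero_le i, hlt⟩)
            have h2 : ¬ i < n 0 := fun h3 => h1 (lt_min (Finset.mem_Ico.mp hi).2 h3)
            rw [if_neg h2, zero_mul]
          rw [← Finset.sum_subset hsub hz]
          refine Finset.sum_congr rfl fun i hi => ?_
          have h1 : i < n 0 := lt_of_lt_of_le (Finset.mem_Ico.mp hi).2 (min_le_right _ _)
          rw [if_pos h1]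
        have hgain_summable : Summable fun m => ∑ i ∈ Finset.range nf,
            (if i < n (m + 1) then H (m + 1) i Z else 0) * (Z (i + 1) - Z i) :=
          summable_sum fun i _ => hsummable_term i
        have hVnn : ∀ m, 0 ≤ V (m + 1) := by
          intro m
          have h1 := hposT m 0 Z hZT
          simpa [piPortR] using h1
        have hVsummable : Summable fun m => V (m + 1) := by
          have h2 := ENNReal.summable_toReal hτ
          exact h2.congr fun m => by rw [ENNReal.toReal_ofReal (hVnn m)]
        have hτtoReal : (∑' m : ℕ, ENNReal.ofReal (V (m + 1))).toReal = ∑' m : ℕ, V (m + 1) := by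
          rw [ENNReal.tsum_toReal_eq fun m => ENNReal.ofReal_ne_top]
          exact tsum_congr fun m => ENNReal.toReal_ofReal (hVnn m)
        have hsum_c : (∑' m : ℕ, c (m + 1)) = (∑' m : ℕ, V (m + 1))
            + ∑' m : ℕ, ∑ i ∈ Finset.range nf,
              (if i < n (m + 1) then H (m + 1) i Z else 0) * (Z (i + 1) - Z i) := by
          rw [← Summable.tsum_add hVsummable hgain_summable]
          exact tsum_congr fun m => hcdecomp m
        have hswap : (∑' m : ℕ, ∑ i ∈ Finset.range nf,
              (if i < n (m + 1) then H (m + 1) i Z else 0) * (Z (i + 1) - Z i))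
            = ∑ i ∈ Finset.range nf, ∑' m : ℕ,
              (if i < n (m + 1) then H (m + 1) i Z else 0) * (Z (i + 1) - Z i) :=
          Summable.tsum_finsetSum fun i _ => hsummable_term i
        have hHstar_sum : ∀ i, Hstar i Z * (Z (i + 1) - Z i)
            = (if i < n 0 then H 0 i Z else 0) * (Z (i + 1) - Z i)
              + ∑' m : ℕ, (if i < n (m + 1) then H (m + 1) i Z else 0) * (Z (i + 1) - Z i) := by
          intro i
          rw [hHstar]
          dsimp only
          rw [add_mul]
          congr 1
          exact (tsum_mul_right).symm
        have hfin : (∑ i ∈ Finset.range nf, Hstar i Z * (Z (i + 1) - Z i))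
            = (∑ i ∈ Finset.range nf, (if i < n 0 then H 0 i Z else 0) * (Z (i + 1) - Z i))
              + ∑ i ∈ Finset.range nf, ∑' m : ℕ,
                (if i < n (m + 1) then H (m + 1) i Z else 0) * (Z (i + 1) - Z i) := by
          rw [← Finset.sum_add_distrib]
          exact Finset.sum_congr rfl fun i _ => hHstar_sum i
        linarith [hreal, hc0decomp, hsum_c, hswap, hfin, hτtoReal]


end Traj
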